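/- Non-empty antecedent cannot entail emp: if Σ is a spatial conjunction containing a predicate S with s ⊨ ¬Empty(S), and s ⊨ WellFormed(Σ), then there exists a heap h such that s,h ⊨ Σ and h ≠ ∅; hence s ⊭ (Σ → emp). -/

import Mathlib

def Heap := ℤ → Option ℤ
def Stack := String → ℤ

def hemp : Heap := fun _ => none
def hsingle (a v : ℤ) : Heap := fun l => if l = a then some v else none
def hdisj (h₁ h₂ : Heap) : Prop := ∀ l, h₁ l = none ∨ h₂ l = none
def hunion (h₁ h₂ : Heap) : Heap := fun l =>
  match h₁ l with
  | some v => some v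
  | none => h₂ l
def hdom (h : Heap) : Set ℤ := {l | h l ≠ none}

/-- Acyclic list segment: `Lseg a b h` means `h` is a list segment from `a` to `b`. -/
inductive Lseg : ℤ → ℤ → Heap → Prop
  | nil (a : ℤ) : Lseg a a hemp
  | cons {a b c : ℤ} {h : Heap} (hne : a ≠ b) (hfresh : h a = none)
      (ht : Lseg c b h) : Lseg a b (hunion (hsingle a c) h)

/-- Spatial predicates. -/
inductive SP where
  | emp : SP
  | next (x y : String) : SP
  | lseg (x y : String) : SP

/-- Satisfaction of a single spatial predicate. -/
def sat (s : Stack) (h : Heap) : SP → Prop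
  | .emp => h = hemp
  | .next x y => h = hsingle (s x) (s y)
  | .lseg x y => Lseg (s x) (s y) h

/-- Satisfaction of a spatial conjunction (list of predicates). -/
def satList (s : Stack) (h : Heap) : List SP → Prop
  | [] => h = hemp
  | S :: Sg => ∃ h₁ h₂, hdisj h₁ h₂ ∧ h = hunion h₁ h₂ ∧ sat s h₁ S ∧ satList s h₂ Sg

/-- Emptiness condition of a spatial predicate. -/
def emptyCond (s : Stack) : SP → Prop
  | .emp => True
  | .next _ _ => False
  | .lseg x y => s x = s y

/-- Address of a spatial predicate (dummy value 0 for `emp`, which is always empty). -/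
def addrVal (s : Stack) : SP → ℤ
  | .emp => 0
  | .next x _ => s x
  | .lseg x _ => s x

def collide (s : Stack) (S S' : SP) : Prop :=
  ¬ emptyCond s S ∧ ¬ emptyCond s S' ∧ addrVal s S = addrVal s S'

def wellFormed (s : Stack) (Sg : List SP) : Prop :=
  List.Pairwise (fun S S' => ¬ collide s S S') Sg

/-! ### Auxiliary definitions for the proof -/

def canon (s : Stack) : SP → Heap
  | .emp => hemp
  | .next x y => hsingle (s x) (s y)
  | .lseg x y => if s x = s y then hemp else hsingle (s x) (s y)

def canonList (s : Stack) : List SP → Heap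
  | [] => hemp
  | S :: Sg => hunion (canon s S) (canonList s Sg)

lemma hunion_hemp_right (h : Heap) : hunion h hemp = h := by
  funext l
  unfold hunion hemp
  cases h l <;> rfl

lemma canon_sat (s : Stack) (S : SP) : sat s (canon s S) S := by
  cases S with
  | emp => rfl
  | next x y => rfl
  | lseg x y =>
    by_cases hxy : s x = s y
    · simp [canon, sat, hxy]
      exact hxy ▸ Lseg.nil (s x)
    · simp [canon, sat, hxy]
      have := Lseg.cons (a := s x) (b := s y) (c := s y) (h := hemp) hxy rfl (Lseg.nil (s y))
      rwa [hunion_hemp_right] at this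

lemma canon_ne_none {s : Stack} {S : SP} {l : ℤ} (h : canon s S l ≠ none) :
    ¬ emptyCond s S ∧ l = addrVal s S := by
  cases S with
  | emp => exact absurd rfl h
  | next x y =>
    simp only [canon, hsingle] at h
    split at h
    · exact ⟨fun hf => hf, by assumption⟩
    · exact absurd rfl h
  | lseg x y =>
    simp only [canon] at h
    split at h
    · exact absurd rfl h
    · simp only [hsingle] at h
      split at h
      · refine ⟨by simpa [emptyCond] using ‹¬ s x = s y›, by assumption⟩
      · exact absurd rfl h

lemma canonList_ne_none {s : Stack} {Sg : List SP} {l : ℤ}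
    (h : canonList s Sg l ≠ none) :
    ∃ S ∈ Sg, ¬ emptyCond s S ∧ l = addrVal s S := by
  induction Sg with
  | nil => exact absurd rfl h
  | cons S Sg ih =>
    simp only [canonList, hunion] at h
    cases hc : canon s S l with
    | some v =>
      exact ⟨S, List.mem_cons_self, canon_ne_none (by rw [hc]; simp)⟩
    | none =>
      rw [hc] at h
      obtain ⟨S', hS', hrest⟩ := ih h
      exact ⟨S', List.mem_cons_of_mem _ hS', hrest⟩

lemma canon_addr_ne_none {s : Stack} {S : SP} (hne : ¬ emptyCond s S) :
    canon s S (addrVal s S) ≠ none := by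
  cases S with
  | emp => exact absurd trivial hne
  | next x y => simp [canon, addrVal, hsingle]
  | lseg x y =>
    have : ¬ s x = s y := hne
    simp [canon, addrVal, hsingle, this]

lemma canonList_disjoint {s : Stack} {S : SP} {Sg : List SP}
    (hnc : ∀ S' ∈ Sg, ¬ collide s S S') :
    hdisj (canon s S) (canonList s Sg) := by
  intro l
  by_cases h1 : canon s S l = none
  · exact Or.inl h1
  · by_cases h2 : canonList s Sg l = none
    · exact Or.inr h2
    · obtain ⟨hneS, hlS⟩ := canon_ne_none h1
      obtain ⟨S', hS', hneS', hlS'⟩ := canonList_ne_none h2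
      exact absurd ⟨hneS, hneS', hlS ▸ hlS'.symm ▸ rfl⟩ (hnc S' hS')

lemma canonList_sat (s : Stack) (Sg : List SP) (hwf : wellFormed s Sg) :
    satList s (canonList s Sg) Sg := by
  induction Sg with
  | nil => rfl
  | cons S Sg ih =>
    rcases hwf with _ | ⟨hnc, hwf'⟩
    exact ⟨canon s S, canonList s Sg, canonList_disjoint hnc, rfl,
      canon_sat s S, ih hwf'⟩

lemma canonList_mem_ne_none {s : Stack} {S : SP} {Sg : List SP}
    (hmem : S ∈ Sg) (hne : ¬ emptyCond s S) :
    canonList s Sg (addrVal s S) ≠ none := by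
  induction Sg with
  | nil => exact absurd hmem List.not_mem_nil
  | cons T Sg ih =>
    simp only [canonList, hunion]
    cases hc : canon s T (addrVal s S) with
    | some v => simp
    | none =>
      rcases List.mem_cons.mp hmem with rfl | hmem'
      · exact absurd hc (canon_addr_ne_none hne)
      · exact ih hmem'

theorem stmt17 (s : Stack) (Sg : List SP) (S : SP)
    (hmem : S ∈ Sg) (hne : ¬ emptyCond s S) (hwf : wellFormed s Sg) :
    (∃ h : Heap, satList s h Sg ∧ h ≠ hemp) ∧
      ¬ (∀ h : Heap, satList s h Sg → h = hemp) := by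
  have hsat := canonList_sat s Sg hwf
  have hnn := canonList_mem_ne_none hmem hne
  have hne' : canonList s Sg ≠ hemp := fun heq => hnn (by rw [heq]; rfl)
  exact ⟨⟨canonList s Sg, hsat, hne'⟩, fun hall => hne' (hall _ hsat)⟩
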